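/- Let k ≥ 2 be an integer, let D be a positive non-square discriminant, and let Q = [a,b,c] be an integral binary quadratic form with b² − 4ac = D. Then for all τ = u+iv ∈ ℍ, R_{2−2k}^{2k−2}(Q(·,1)^{k−1})(τ) = ((2k−2)!/v^{2k−2}) · Q(conj(τ),1)^{k−1}, where Q(z,1) = az² + bz + c. -/

import Mathlib

noncomputable section

open Complex Real Finset

/-- The upper half-plane, as a subset of `ℂ`. -/
def UpperHalf : Set ℂ := {z : ℂ | 0 < z.im}

/-- The holomorphic Wirtinger derivative `∂f/∂τ = (1/2)(∂f/∂u − i ∂f/∂v)`. -/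
def wirtinger (f : ℂ → ℂ) (τ : ℂ) : ℂ :=
  (1 / 2) * (fderiv ℝ f τ 1 - Complex.I * fderiv ℝ f τ Complex.I)

/-- The antiholomorphic Wirtinger derivative `∂f/∂τ̄ = (1/2)(∂f/∂u + i ∂f/∂v)`. -/
def wirtingerBar (f : ℂ → ℂ) (τ : ℂ) : ℂ :=
  (1 / 2) * (fderiv ℝ f τ 1 + Complex.I * fderiv ℝ f τ Complex.I)

/-- The Maass raising operator `R_κ(f) = 2i ∂f/∂τ + (κ/v) f`. -/
def raise (κ : ℤ) (f : ℂ → ℂ) (τ : ℂ) : ℂ :=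
  2 * Complex.I * wirtinger f τ + ((κ : ℂ) / (τ.im : ℂ)) * f τ

/-- Iterated Maass raising operator `R_κ^n = R_{κ+2(n−1)} ∘ ⋯ ∘ R_κ`. -/
def raiseIter (κ : ℤ) : ℕ → (ℂ → ℂ) → (ℂ → ℂ)
  | 0, f => f
  | n + 1, f => raise (κ + 2 * (n : ℤ)) (raiseIter κ n f)

/-- The flipping operator `𝔉_{2−2k}(f)(τ) = −(v^{2k−2}/(2k−2)!) conj(R_{2−2k}^{2k−2}(f)(τ))`. -/
def flipOp (k : ℕ) (f : ℂ → ℂ) (τ : ℂ) : ℂ :=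
  -(((τ.im : ℂ) ^ (2 * k - 2)) / ((2 * k - 2).factorial : ℂ)) *
    (starRingEnd ℂ) (raiseIter (2 - 2 * (k : ℤ)) (2 * k - 2) f τ)

/-- The weight `−2k` flipping operator `𝔉_{−2k}(f)(τ) = −(v^{2k}/(2k)!) conj(R_{−2k}^{2k}(f)(τ))`. -/
def flipOpNeg (k : ℕ) (f : ℂ → ℂ) (τ : ℂ) : ℂ :=
  -(((τ.im : ℂ) ^ (2 * k)) / ((2 * k).factorial : ℂ)) *
    (starRingEnd ℂ) (raiseIter (-(2 * (k : ℤ))) (2 * k) f τ)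

/-- The Bol-type operator `𝒟 = (1/(2πi)) ∂/∂τ`. -/
def bol (f : ℂ → ℂ) : ℂ → ℂ := fun τ => (1 / (2 * (π : ℂ) * Complex.I)) * wirtinger f τ

/-- Iterates `𝒟^r` of the Bol-type operator. -/
def bolIter (r : ℕ) (f : ℂ → ℂ) : ℂ → ℂ := bol^[r] f

/-- The shadow operator `ξ_{2−2k}(f)(τ) = 2i v^{2−2k} conj(∂f/∂τ̄(τ))`. -/
def xiOp (k : ℕ) (f : ℂ → ℂ) (τ : ℂ) : ℂ :=
  2 * Complex.I * (τ.im : ℂ) ^ ((2 : ℤ) - 2 * k) * (starRingEnd ℂ) (wirtingerBar f τ)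

/-- Integral binary quadratic forms `[a,b,c]` of discriminant `D`. -/
def QD (D : ℤ) : Type := {q : ℤ × ℤ × ℤ // q.2.1 ^ 2 - 4 * q.1 * q.2.2 = D}

/-- `Q(z,1) = a z² + b z + c`. -/
def qval (q : ℤ × ℤ × ℤ) (z : ℂ) : ℂ :=
  (q.1 : ℂ) * z ^ 2 + (q.2.1 : ℂ) * z + (q.2.2 : ℂ)

/-- `Q_τ = (a(u²+v²) + bu + c)/v`. -/
def qtau (q : ℤ × ℤ × ℤ) (τ : ℂ) : ℝ :=
  ((q.1 : ℝ) * (τ.re ^ 2 + τ.im ^ 2) + (q.2.1 : ℝ) * τ.re + (q.2.2 : ℝ)) / τ.im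

/-- The exceptional set `E_D`, the union of the geodesics `Q_τ = 0`. -/
def ED (D : ℤ) : Set ℂ := {τ : ℂ | ∃ q : QD D, qtau q.1 τ = 0}

/-- The incomplete beta function `β(x;r,s) = ∫₀ˣ t^{r−1}(1−t)^{s−1} dt`. -/
def betaInt (x r s : ℝ) : ℝ := ∫ t in (0 : ℝ)..x, t ^ (r - 1) * (1 - t) ^ (s - 1)

/-- The locally harmonic Maass form `𝓕_{1−k,D}` of Bringmann–Kane–Kohnen. -/
def FBKK (k : ℕ) (D : ℕ) (τ : ℂ) : ℂ :=
  (((D : ℝ) ^ ((1 : ℝ) / 2 - (k : ℝ)) / (2 * ((2 * k - 2).choose (k - 1) : ℝ) * π) : ℝ) : ℂ) *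
    ∑' q : QD (D : ℤ),
      ((Real.sign (qtau q.1 τ) : ℝ) : ℂ) * qval q.1 τ ^ (k - 1) *
        ((betaInt ((D : ℝ) * τ.im ^ 2 / ‖qval q.1 τ‖ ^ 2)
            ((k : ℝ) - 1 / 2) (1 / 2) : ℝ) : ℂ)

/-- The function `𝒢_{−k,D}` of Bringmann–Mono. -/
def GBM (k : ℕ) (D : ℕ) (τ : ℂ) : ℂ :=
  (1 / 2 : ℂ) *
    ∑' q : QD (D : ℤ),
      qval q.1 τ ^ k *
        ((betaInt ((D : ℝ) * τ.im ^ 2 / ‖qval q.1 τ‖ ^ 2)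
            ((k : ℝ) + 1 / 2) (1 / 2) : ℝ) : ℂ)

/-- The rising factorial `(a)_n = a(a+1)⋯(a+n−1)`. -/
def risingFactorial (a : ℤ) (n : ℕ) : ℤ := ∏ i ∈ Finset.range n, (a + (i : ℤ))


private lemma wirtinger_congr {f g : ℂ → ℂ} {τ : ℂ} (h : f =ᶠ[nhds τ] g) :
    wirtinger f τ = wirtinger g τ := by
  unfold wirtinger; rw [Filter.EventuallyEq.fderiv_eq h]

private lemma raise_congr {f g : ℂ → ℂ} {τ : ℂ} (h : f =ᶠ[nhds τ] g) (κ : ℤ) :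
    raise κ f τ = raise κ g τ := by
  unfold raise
  rw [wirtinger_congr h, h.eq_of_nhds]

private lemma term_hasFDerivAt (q : Polynomial ℂ) (e : ℤ) (τ : ℂ) (hτ : τ.im ≠ 0) :
    HasFDerivAt (fun z : ℂ => q.eval z * ((z.im : ℂ)) ^ e)
      ((((Polynomial.derivative q).eval τ * (τ.im : ℂ) ^ e) • (1 : ℂ →L[ℝ] ℂ))
        + ((q.eval τ * (e : ℂ) * (τ.im : ℂ) ^ (e - 1)) •
            (Complex.ofRealCLM.comp Complex.imCLM))) τ := by
  have h1 : HasFDerivAt (fun z : ℂ => q.eval z)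
      (((1 : ℂ →L[ℂ] ℂ).smulRight ((Polynomial.derivative q).eval τ)).restrictScalars ℝ) τ :=
    (q.hasDerivAt τ).hasFDerivAt.restrictScalars ℝ
  have him : HasFDerivAt (fun z : ℂ => z.im) (Complex.imCLM : ℂ →L[ℝ] ℝ) τ :=
    Complex.imCLM.hasFDerivAt
  have hz : HasDerivAt (fun x : ℝ => x ^ e) ((e : ℝ) * τ.im ^ (e - 1)) τ.im :=
    hasDerivAt_zpow e τ.im (Or.inl hτ)
  have h2 : HasFDerivAt (fun z : ℂ => (z.im ^ e))
      (((e : ℝ) * τ.im ^ (e - 1)) • (Complex.imCLM : ℂ →L[ℝ] ℝ)) τ :=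
    hz.comp_hasFDerivAt τ him
  have h3 : HasFDerivAt (fun z : ℂ => ((z.im ^ e : ℝ) : ℂ))
      (Complex.ofRealCLM.comp (((e : ℝ) * τ.im ^ (e - 1)) • (Complex.imCLM : ℂ →L[ℝ] ℝ))) τ :=
    Complex.ofRealCLM.hasFDerivAt.comp τ h2
  have h4 := h1.mul h3
  have hfun : (fun z : ℂ => q.eval z * ((z.im : ℂ)) ^ e)
      = fun z : ℂ => q.eval z * ((z.im ^ e : ℝ) : ℂ) := by
    funext z; rw [Complex.ofReal_zpow]
  rw [hfun]
  refine h4.congr_fderiv ?_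
  ext w
  simp [ContinuousLinearMap.smulRight_apply, Complex.ofReal_zpow]
  push_cast
  ring

private lemma cterm_fun_eq (cst : ℂ) (q : Polynomial ℂ) (e : ℤ) :
    (fun z : ℂ => cst * q.eval z * ((z.im : ℂ)) ^ e)
      = fun z : ℂ => (Polynomial.C cst * q).eval z * ((z.im : ℂ)) ^ e := by
  funext z; simp

private lemma cterm_diffAt (cst : ℂ) (q : Polynomial ℂ) (e : ℤ) (τ : ℂ) (hτ : τ.im ≠ 0) :
    DifferentiableAt ℝ (fun z : ℂ => cst * q.eval z * ((z.im : ℂ)) ^ e) τ := by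
  rw [cterm_fun_eq]
  exact (term_hasFDerivAt (Polynomial.C cst * q) e τ hτ).differentiableAt

private lemma wirtinger_cterm (cst : ℂ) (q : Polynomial ℂ) (e : ℤ) (τ : ℂ) (hτ : τ.im ≠ 0) :
    wirtinger (fun z : ℂ => cst * q.eval z * ((z.im : ℂ)) ^ e) τ
      = cst * (Polynomial.derivative q).eval τ * (τ.im : ℂ) ^ e
        - (Complex.I / 2) * (cst * q.eval τ * (e : ℂ) * (τ.im : ℂ) ^ (e - 1)) := by
  rw [cterm_fun_eq]
  unfold wirtinger
  rw [(term_hasFDerivAt (Polynomial.C cst * q) e τ hτ).fderiv]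
  simp [Complex.ofReal_one]
  ring_nf
  rw [Complex.I_sq]
  ring

private lemma wirtinger_sum {ι : Type*} (s : Finset ι) (f : ι → ℂ → ℂ) (τ : ℂ)
    (h : ∀ i ∈ s, DifferentiableAt ℝ (f i) τ) :
    wirtinger (fun z => ∑ i ∈ s, f i z) τ = ∑ i ∈ s, wirtinger (f i) τ := by
  unfold wirtinger
  rw [fderiv_fun_sum h]
  simp only [ContinuousLinearMap.coe_sum', Finset.sum_apply, Finset.mul_sum,
    ← Finset.sum_sub_distrib]

private def co (m n j : ℕ) : ℂ :=
  (-1) ^ j * (n.choose j) * ((m - n + j).factorial) / ((m - n).factorial)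

private lemma co_zero (m n : ℕ) : co m n 0 = 1 := by
  simp [co, div_self (by exact_mod_cast (m - n).factorial_ne_zero : ((m - n).factorial : ℂ) ≠ 0)]

private lemma co_top (m n : ℕ) : co m n (n + 1) = 0 := by
  simp [co]

private lemma co_rec (m n j : ℕ) (h : n + 1 ≤ m) (hj : j ≤ n) :
    co m (n + 1) (j + 1)
      = co m n (j + 1) + (2 * (n : ℂ) - (m : ℂ) - (j : ℂ)) * co m n j := by
  obtain ⟨d, rfl⟩ : ∃ d, m = n + 1 + d := ⟨m - (n + 1), by omega⟩
  have e1 : n + 1 + d - (n + 1) = d := by omega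
  have e2 : n + 1 + d - n = d + 1 := by omega
  unfold co
  rw [e1, e2]
  have hps : ((n + 1).choose (j + 1) : ℂ) = (n.choose j : ℂ) + (n.choose (j + 1) : ℂ) := by
    rw [Nat.choose_succ_succ]; push_cast; ring
  have hcr : ((n.choose (j + 1) : ℂ)) * (j + 1) = (n.choose j : ℂ) * ((n : ℂ) - (j : ℂ)) := by
    have := Nat.choose_succ_right_eq n j
    have h2 : ((n.choose (j + 1) * (j + 1) : ℕ) : ℂ) = ((n.choose j * (n - j) : ℕ) : ℂ) := by
      exact_mod_cast congrArg (Nat.cast (R := ℂ)) this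
    push_cast [Nat.cast_sub hj] at h2
    exact_mod_cast h2
  have hf1 : ((d + (j + 1)).factorial : ℂ) = ((d + 1 + j).factorial : ℂ) := by
    norm_num [show d + (j + 1) = d + 1 + j by omega]
  have hf2 : ((d + 1 + (j + 1)).factorial : ℂ) = ((d + 1 + j + 1) : ℂ) * ((d + 1 + j).factorial : ℂ) := by
    rw [show d + 1 + (j + 1) = (d + 1 + j) + 1 by omega, Nat.factorial_succ]; push_cast; ring
  have hf3 : ((d + 1).factorial : ℂ) = ((d : ℂ) + 1) * (d.factorial : ℂ) := by
    rw [Nat.factorial_succ]; push_cast; ring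
  rw [hf1, hf2, hf3]
  have hd0 : (d.factorial : ℂ) ≠ 0 := by exact_mod_cast d.factorial_ne_zero
  have hd1 : ((d : ℂ) + 1) ≠ 0 := by
    intro hcon
    have : ((d : ℂ) + 1) = ((d + 1 : ℕ) : ℂ) := by push_cast; ring
    rw [this] at hcon
    exact_mod_cast hcon
  field_simp
  push_cast
  linear_combination (-((d:ℂ)+1) * (((d+1+j).factorial : ℕ) : ℂ) * (-1:ℂ)^j) * hps + ((((d+1+j).factorial : ℕ) : ℂ) * (-1:ℂ)^j) * hcr

private lemma raiseIter_poly (p : Polynomial ℂ) (m : ℕ) :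
    ∀ n, n ≤ m → ∀ τ : ℂ, τ.im ≠ 0 →
      raiseIter (-(m : ℤ)) n (fun z => p.eval z) τ
        = ∑ j ∈ Finset.range (n + 1),
            co m n j * (2 * Complex.I) ^ (n - j) * ((Polynomial.derivative^[n - j] p).eval τ)
              * ((τ.im : ℂ)) ^ (-(j : ℤ)) := by
  intro n
  induction n with
  | zero =>
    intro _ τ hτ
    simp [raiseIter, co_zero]
  | succ n ih =>
    intro hn τ hτ
    have hn' : n ≤ m := by omega
    have hv : ((τ.im : ℂ)) ≠ 0 := by exact_mod_cast hτ
    have hopen : IsOpen {z : ℂ | z.im ≠ 0} :=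
      IsOpen.preimage Complex.continuous_im isOpen_compl_singleton
    have hev : raiseIter (-(m : ℤ)) n (fun z => p.eval z) =ᶠ[nhds τ]
        (fun z => ∑ j ∈ Finset.range (n + 1),
          co m n j * (2 * Complex.I) ^ (n - j) * ((Polynomial.derivative^[n - j] p).eval z)
            * ((z.im : ℂ)) ^ (-(j : ℤ))) := by
      filter_upwards [hopen.mem_nhds hτ] with z hz
      exact ih hn' z hz
    have hstep : raiseIter (-(m : ℤ)) (n + 1) (fun z => p.eval z) τ
        = raise (-(m : ℤ) + 2 * (n : ℤ)) (raiseIter (-(m : ℤ)) n (fun z => p.eval z)) τ := rfl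
    rw [hstep, raise_congr hev]
    -- now compute raise of the explicit sum
    unfold raise
    rw [wirtinger_sum _ _ τ (fun j _ => cterm_diffAt _ _ _ τ hτ)]
    rw [Finset.sum_congr rfl (fun j _ => wirtinger_cterm (co m n j * (2 * Complex.I) ^ (n - j))
        (Polynomial.derivative^[n - j] p) (-(j : ℤ)) τ hτ)]
    -- abbreviations
    set v : ℂ := ((τ.im : ℝ) : ℂ) with hvdef
    -- A and B
    have key : 2 * Complex.I * (∑ j ∈ Finset.range (n + 1),
          (co m n j * (2 * Complex.I) ^ (n - j) * (Polynomial.derivative (Polynomial.derivative^[n - j] p)).eval τ * v ^ (-(j : ℤ))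
            - Complex.I / 2 * (co m n j * (2 * Complex.I) ^ (n - j) * (Polynomial.derivative^[n - j] p).eval τ * ((-(j : ℤ) : ℤ) : ℂ) * v ^ ((-(j : ℤ)) - 1))))
        + (((-(m : ℤ) + 2 * (n : ℤ) : ℤ) : ℂ) / v) * (∑ j ∈ Finset.range (n + 1),
            co m n j * (2 * Complex.I) ^ (n - j) * (Polynomial.derivative^[n - j] p).eval τ * v ^ (-(j : ℤ)))
        = ∑ j ∈ Finset.range (n + 1),
            ((co m n j * (2 * Complex.I) ^ (n + 1 - j) * ((Polynomial.derivative^[n + 1 - j] p).eval τ) * v ^ (-(j : ℤ)))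
             + ((2 * (n : ℂ) - (m : ℂ) - (j : ℂ)) * co m n j * (2 * Complex.I) ^ (n - j) * ((Polynomial.derivative^[n - j] p).eval τ) * v ^ (-((j : ℤ) + 1)))) := by
      rw [Finset.mul_sum, Finset.mul_sum, ← Finset.sum_add_distrib]
      refine Finset.sum_congr rfl fun j hj => ?_
      have hjn : j ≤ n := by simpa [Nat.lt_succ_iff] using hj
      have hD : Polynomial.derivative (Polynomial.derivative^[n - j] p)
          = Polynomial.derivative^[n + 1 - j] p := by
        rw [← Function.iterate_succ_apply' Polynomial.derivative (n - j) p]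
        congr 1
        omega
      have hP : (2 * Complex.I) * (2 * Complex.I) ^ (n - j) = (2 * Complex.I) ^ (n + 1 - j) := by
        rw [← pow_succ']
        congr 1
        omega
      have hz1 : v ^ ((-(j : ℤ)) - 1) = v ^ (-((j : ℤ) + 1)) := by
        congr 1; ring
      have hz2 : v ^ (-((j : ℤ) + 1)) = v ^ (-(j : ℤ)) * v⁻¹ := by
        rw [show -((j : ℤ) + 1) = -(j : ℤ) - 1 by ring, zpow_sub_one₀ hv]
      rw [hD, hz1, hz2, ← hP]
      push_cast
      generalize v ^ (-(j : ℤ)) = w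
      field_simp
      ring_nf
      rw [Complex.I_sq]
      ring
    rw [key, Finset.sum_add_distrib]
    have hAsum : (∑ j ∈ Finset.range (n + 1),
          co m n j * (2 * Complex.I) ^ (n + 1 - j) * ((Polynomial.derivative^[n + 1 - j] p).eval τ) * v ^ (-(j : ℤ)))
        = (∑ j ∈ Finset.range (n + 1),
            co m n (j + 1) * (2 * Complex.I) ^ (n + 1 - (j + 1)) * ((Polynomial.derivative^[n + 1 - (j + 1)] p).eval τ) * v ^ (-((j + 1 : ℕ) : ℤ)))
          + co m n 0 * (2 * Complex.I) ^ (n + 1 - 0) * ((Polynomial.derivative^[n + 1 - 0] p).eval τ) * v ^ (-((0 : ℕ) : ℤ)) := by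
      have h1 : (∑ j ∈ Finset.range (n + 2),
            co m n j * (2 * Complex.I) ^ (n + 1 - j) * ((Polynomial.derivative^[n + 1 - j] p).eval τ) * v ^ (-(j : ℤ)))
          = (∑ j ∈ Finset.range (n + 1),
              co m n j * (2 * Complex.I) ^ (n + 1 - j) * ((Polynomial.derivative^[n + 1 - j] p).eval τ) * v ^ (-(j : ℤ)))
            + co m n (n + 1) * (2 * Complex.I) ^ (n + 1 - (n + 1)) * ((Polynomial.derivative^[n + 1 - (n + 1)] p).eval τ) * v ^ (-((n + 1 : ℕ) : ℤ)) :=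
        Finset.sum_range_succ _ (n + 1)
      rw [co_top] at h1
      simp only [zero_mul, add_zero] at h1
      have h2 := Finset.sum_range_succ' (fun j =>
          co m n j * (2 * Complex.I) ^ (n + 1 - j) * ((Polynomial.derivative^[n + 1 - j] p).eval τ) * v ^ (-(j : ℤ))) (n + 1)
      rw [h2] at h1
      exact h1.symm
    rw [hAsum]
    rw [Finset.sum_range_succ' (fun j => co m (n + 1) j * (2 * Complex.I) ^ (n + 1 - j)
        * ((Polynomial.derivative^[n + 1 - j] p).eval τ) * v ^ (-(j : ℤ))) (n + 1)]
    have hT : ∀ j ∈ Finset.range (n + 1),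
        co m (n + 1) (j + 1) * (2 * Complex.I) ^ (n + 1 - (j + 1))
            * ((Polynomial.derivative^[n + 1 - (j + 1)] p).eval τ) * v ^ (-((j + 1 : ℕ) : ℤ))
          = co m n (j + 1) * (2 * Complex.I) ^ (n + 1 - (j + 1))
              * ((Polynomial.derivative^[n + 1 - (j + 1)] p).eval τ) * v ^ (-((j + 1 : ℕ) : ℤ))
            + (2 * (n : ℂ) - (m : ℂ) - (j : ℂ)) * co m n j * (2 * Complex.I) ^ (n - j)
              * ((Polynomial.derivative^[n - j] p).eval τ) * v ^ (-((j : ℤ) + 1)) := by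
      intro j hj
      have hjn : j ≤ n := by simpa [Nat.lt_succ_iff] using hj
      have hs : n + 1 - (j + 1) = n - j := by omega
      have hc : (-((j + 1 : ℕ) : ℤ)) = -((j : ℤ) + 1) := by push_cast; ring
      rw [hs, hc, co_rec m n j hn hjn]
      ring
    rw [Finset.sum_congr rfl hT, Finset.sum_add_distrib]
    simp only [co_zero]
    ring

private lemma taylor_expand (p : Polynomial ℂ) (m : ℕ) (hdeg : p.natDegree ≤ m) (s t : ℂ) :
    p.eval s = ∑ i ∈ Finset.range (m + 1),
      ((Polynomial.derivative^[i] p).eval t) * (s - t) ^ i / (i.factorial : ℂ) := by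
  conv_lhs => rw [← Polynomial.taylor_eval_sub t p s]
  rw [Polynomial.eval_eq_sum_range' (n := m + 1) (by simpa using Nat.lt_succ_of_le hdeg) (s - t)]
  refine Finset.sum_congr rfl fun i _ => ?_
  rw [Polynomial.taylor_coeff]
  have h := congrFun (Polynomial.factorial_smul_hasseDeriv (R := ℂ) i) p
  have h2 : (i.factorial : ℂ) • (Polynomial.hasseDeriv i p) = Polynomial.derivative^[i] p := by
    rw [← h]; simp [Nat.cast_smul_eq_nsmul]
  have h3 : ((Polynomial.derivative^[i] p).eval t) = (i.factorial : ℂ) * (Polynomial.hasseDeriv i p).eval t := by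
    rw [← h2]; simp
  rw [h3]
  have : (i.factorial : ℂ) ≠ 0 := by exact_mod_cast i.factorial_ne_zero
  field_simp

private lemma G_final (p : Polynomial ℂ) (m : ℕ) (hm : Even m) (hdeg : p.natDegree ≤ m)
    (τ : ℂ) (hτ : τ.im ≠ 0) :
    ∑ j ∈ Finset.range (m + 1),
        co m m j * (2 * Complex.I) ^ (m - j) * ((Polynomial.derivative^[m - j] p).eval τ)
          * ((τ.im : ℂ)) ^ (-(j : ℤ))
      = ((m.factorial : ℂ) / ((τ.im : ℂ)) ^ m) * p.eval ((starRingEnd ℂ) τ) := by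
  have hv : ((τ.im : ℂ)) ≠ 0 := by exact_mod_cast hτ
  rw [taylor_expand p m hdeg ((starRingEnd ℂ) τ) τ]
  have hsub : (starRingEnd ℂ) τ - τ = -(2 * (τ.im : ℂ) * Complex.I) := by
    have := Complex.sub_conj τ
    have h2 : ((2 * τ.im : ℝ) : ℂ) = 2 * (τ.im : ℂ) := by push_cast; ring
    rw [h2] at this
    linear_combination -this
  rw [← Finset.sum_range_reflect]
  rw [Finset.mul_sum]
  refine Finset.sum_congr rfl fun j hj => ?_
  have hjm : j ≤ m := by
    have := Finset.mem_range.mp hj; omega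
  have h1 : m + 1 - 1 - j = m - j := by omega
  rw [h1]
  have h2 : m - (m - j) = j := by omega
  rw [h2, hsub]
  have hco : co m m (m - j) = (-1 : ℂ) ^ (m - j) * (m.choose j : ℂ) * ((m - j).factorial : ℂ) := by
    unfold co
    rw [Nat.sub_self, Nat.zero_add, Nat.choose_symm hjm]
    simp
  rw [hco]
  have hsgn : ((-1 : ℂ)) ^ (m - j) = (-1 : ℂ) ^ j := by
    have hmul : ((-1 : ℂ)) ^ (m - j) * (-1 : ℂ) ^ j = 1 := by
      rw [← pow_add, Nat.sub_add_cancel hjm]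
      exact hm.neg_one_pow
    have hsq : ((-1 : ℂ)) ^ j * (-1 : ℂ) ^ j = 1 := by
      rw [← pow_add, ← two_mul]
      exact (even_two_mul j).neg_one_pow
    have := mul_right_cancel₀ (b := ((-1 : ℂ)) ^ j) (by
      intro hc
      have : ((-1 : ℂ)) ^ j ≠ 0 := pow_ne_zero _ (by norm_num)
      exact this hc) (hmul.trans hsq.symm)
    exact this
  rw [hsgn]
  have hfac : (m.choose j : ℂ) * ((m - j).factorial : ℂ) * (j.factorial : ℂ) = (m.factorial : ℂ) := by
    have := Nat.choose_mul_factorial_mul_factorial hjm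
    push_cast [← this]
    ring
  have hjfac : (j.factorial : ℂ) ≠ 0 := by exact_mod_cast j.factorial_ne_zero
  have hzp : ((τ.im : ℂ)) ^ (-((m - j : ℕ) : ℤ)) = (((τ.im : ℂ)) ^ ((m - j : ℕ)))⁻¹ := by
    rw [zpow_neg, zpow_natCast]
  rw [hzp]
  have hpow : ((τ.im : ℂ)) ^ ((m - j : ℕ)) * ((τ.im : ℂ)) ^ j = ((τ.im : ℂ)) ^ m := by
    rw [← pow_add, Nat.sub_add_cancel hjm]
  have hne1 : (((τ.im : ℂ)) ^ ((m - j : ℕ))) ≠ 0 := pow_ne_zero _ hv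
  have hne2 : (((τ.im : ℂ)) ^ m) ≠ 0 := pow_ne_zero _ hv
  have hexp : (-(2 * (τ.im : ℂ) * Complex.I)) ^ j
      = (-1) ^ j * 2 ^ j * ((τ.im : ℂ)) ^ j * Complex.I ^ j := by
    rw [show -(2 * (τ.im : ℂ) * Complex.I) = (-1) * 2 * (τ.im : ℂ) * Complex.I by ring,
      mul_pow, mul_pow, mul_pow]
  rw [hexp]
  field_simp
  rw [← hfac, ← hpow]
  ring

/-- For a quadratic form `Q = [a,b,c]` of positive non-square discriminant `D`,
`R_{2−2k}^{2k−2}(Q(·,1)^{k−1})(τ) = ((2k−2)!/v^{2k−2}) Q(τ̄,1)^{k−1}` on `ℍ`. -/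
theorem raiseIter_qval (k : ℕ) (hk : 2 ≤ k) (D : ℤ) (hD : 0 < D) (hDns : ¬ IsSquare D)
    (a b c : ℤ) (hdisc : b ^ 2 - 4 * a * c = D) (τ : ℂ) (hτ : 0 < τ.im) :
    raiseIter (2 - 2 * (k : ℤ)) (2 * k - 2) (fun z => qval (a, b, c) z ^ (k - 1)) τ
      = (((2 * k - 2).factorial : ℂ) / (τ.im : ℂ) ^ (2 * k - 2)) *
          qval (a, b, c) ((starRingEnd ℂ) τ) ^ (k - 1) := by
  have him : τ.im ≠ 0 := ne_of_gt hτ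
  set m : ℕ := 2 * k - 2 with hm
  set p : Polynomial ℂ := (Polynomial.C (a : ℂ) * Polynomial.X ^ 2
      + Polynomial.C (b : ℂ) * Polynomial.X + Polynomial.C (c : ℂ)) ^ (k - 1) with hp
  have hfun : (fun z => qval (a, b, c) z ^ (k - 1)) = fun z => p.eval z := by
    funext z
    simp [qval, hp]
  have hkind : (2 - 2 * (k : ℤ)) = -((m : ℕ) : ℤ) := by omega
  have hdeg : p.natDegree ≤ m := by
    have h2 : (Polynomial.C (a : ℂ) * Polynomial.X ^ 2
        + Polynomial.C (b : ℂ) * Polynomial.X + Polynomial.C (c : ℂ)).natDegree ≤ 2 := by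
      compute_degree
    refine le_trans Polynomial.natDegree_pow_le ?_
    have := Nat.mul_le_mul_left (k - 1) h2
    omega
  have heven : Even m := ⟨k - 1, by omega⟩
  rw [hfun, hkind, raiseIter_poly p m m le_rfl τ him, G_final p m heven hdeg τ him]
  rw [show qval (a, b, c) ((starRingEnd ℂ) τ) ^ (k - 1) = p.eval ((starRingEnd ℂ) τ) from
    congrFun hfun ((starRingEnd ℂ) τ)]

end
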